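/- arXiv:2209.07490 — 6 statements merged into one kernel-verified Lean document; each statement's English description precedes it below -/
import Mathlib

section
/- Affine Gaussian swap identity (density form, general case of the swap algorithm): let μ₀, b be reals, v₀, v positive reals, and a a nonzero real. Set μ₀' := a*μ₀ + b, v₀' := a^2 * v₀, w := (1/v₀' + 1/v)⁻¹, and for y : ℝ set m(y) := (μ₀'/v₀' + y/v) * w. Then for all real x, y: φ(μ₀, v₀; x) * φ(a*x + b, v; y) = φ(μ₀', v₀' + v; y) * φ((m(y) - b)/a, w/a^2; x). -/
/-- The Gaussian probability density with mean `μ` and (positive real) variance `v`. -/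
noncomputable def gaussPDF (μ v x : ℝ) : ℝ :=
  (Real.sqrt (2 * Real.pi * v))⁻¹ * Real.exp (-(x - μ) ^ 2 / (2 * v))

/-- Affine Gaussian swap identity (density form, general case of the swap algorithm):
with `μ₀' = a*μ₀ + b`, `v₀' = a^2 * v₀`, `w = (1/v₀' + 1/v)⁻¹` and
`m y = (μ₀'/v₀' + y/v) * w`, a prior `X₁ ~ N(μ₀, v₀)` with likelihood
`X₂ | X₁ = x ~ N(a*x + b, v)` re-factorizes as `X₂ ~ N(μ₀', v₀' + v)` with posterior
`X₁ | X₂ = y ~ N((m y - b)/a, w/a^2)`. -/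
theorem affine_gaussian_swap (μ₀ b : ℝ) (v₀ v : ℝ) (hv₀ : 0 < v₀) (hv : 0 < v)
    (a : ℝ) (ha : a ≠ 0) (x y : ℝ) :
    gaussPDF μ₀ v₀ x * gaussPDF (a * x + b) v y =
      gaussPDF (a * μ₀ + b) (a ^ 2 * v₀ + v) y *
        gaussPDF
          ((((a * μ₀ + b) / (a ^ 2 * v₀) + y / v) * (1 / (a ^ 2 * v₀) + 1 / v)⁻¹ - b) / a)
          ((1 / (a ^ 2 * v₀) + 1 / v)⁻¹ / a ^ 2) x := by
  have ha2 : (0:ℝ) < a ^ 2 := by positivity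
  have hv₀' : 0 < a ^ 2 * v₀ := by positivity
  have hs : 0 < 1 / (a ^ 2 * v₀) + 1 / v := by positivity
  have hw : 0 < (1 / (a ^ 2 * v₀) + 1 / v)⁻¹ := inv_pos.mpr hs
  have hpi := Real.pi_pos
  unfold gaussPDF
  conv_lhs => rw [mul_mul_mul_comm, ← mul_inv, ← Real.sqrt_mul (by positivity), ← Real.exp_add]
  conv_rhs => rw [mul_mul_mul_comm, ← mul_inv, ← Real.sqrt_mul (by positivity), ← Real.exp_add]
  congr 2
  · have hd : v₀ * a ^ 2 + v ≠ 0 := by positivity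
    have hd2 : a ^ 2 * v₀ + v ≠ 0 := by positivity
    congr 1
    field_simp
    ring
  · field_simp
    ring
end

section
/- Marginal of a linear-Gaussian model (measure form): for every real μ₀, a, b and all nonnegative-real variances v₀, v, the Measure.bind of the Gaussian measure gaussianReal μ₀ v₀ with the kernel x ↦ gaussianReal (a*x + b) v equals gaussianReal (a*μ₀ + b) (a^2 * v₀ + v). That is, (gaussianReal μ₀ v₀).bind (fun x => gaussianReal (a*x + b) v) = gaussianReal (a*μ₀ + b) (a^2 * v₀ + v). -/
open MeasureTheory ProbabilityTheory Real
open scoped NNReal ENNReal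

lemma meas_gauss_kernel (a b : ℝ) (v : ℝ≥0) :
    Measurable (fun x : ℝ => gaussianReal (a * x + b) v) := by
  by_cases hv : v = 0
  · simp only [hv, gaussianReal_zero_var]
    exact Measure.measurable_dirac.comp (by fun_prop)
  · apply Measure.measurable_of_measurable_coe
    intro s hs
    simp_rw [gaussianReal_of_var_ne_zero _ hv, withDensity_apply _ hs]
    apply Measurable.lintegral_prod_right'
      (f := fun p : ℝ × ℝ => gaussianPDF (a * p.1 + b) v p.2)
    unfold gaussianPDF gaussianPDFReal
    fun_prop

lemma pdf_prod (μ₀ a b : ℝ) {v₀ v : ℝ≥0} (h₀ : v₀ ≠ 0) (hv : v ≠ 0) (y x : ℝ) :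
    gaussianPDFReal (a * x + b) v y * gaussianPDFReal μ₀ v₀ x =
      gaussianPDFReal (a * μ₀ + b) (NNReal.mk (a ^ 2) (sq_nonneg a) * v₀ + v) y *
        gaussianPDFReal ((a * v₀ * (y - b) + v * μ₀) / (a ^ 2 * v₀ + v))
          (NNReal.mk (v₀ * v / (a ^ 2 * v₀ + v)) (by positivity)) x := by
  have hV0 : (0:ℝ) < v₀ := lt_of_le_of_ne v₀.2 (by exact_mod_cast (Ne.symm h₀))
  have hV : (0:ℝ) < v := lt_of_le_of_ne v.2 (by exact_mod_cast (Ne.symm hv))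
  have hW : (0:ℝ) < a ^ 2 * v₀ + v := by positivity
  unfold gaussianPDFReal
  push_cast
  rw [mul_mul_mul_comm, mul_mul_mul_comm ((√(2 * π * (a ^ 2 * ↑v₀ + ↑v)))⁻¹)]
  congr 1
  · rw [← mul_inv, ← mul_inv, ← Real.sqrt_mul (by positivity), ← Real.sqrt_mul (by positivity)]
    congr 2
    field_simp
  · rw [← Real.exp_add, ← Real.exp_add]
    congr 1
    field_simp
    ring

lemma toNNReal_sq_aux (a : ℝ) : (a ^ 2).toNNReal = NNReal.mk (a ^ 2) (sq_nonneg a) := by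
  ext; simp [Real.coe_toNNReal _ (sq_nonneg a)]

/-- Marginal of a linear-Gaussian model (measure form): binding the Gaussian measure
`N(μ₀, v₀)` with the kernel `x ↦ N(a*x + b, v)` yields `N(a*μ₀ + b, a^2*v₀ + v)`. -/
theorem gaussian_linear_marginal (μ₀ a b : ℝ) (v₀ v : ℝ≥0) :
    (gaussianReal μ₀ v₀).bind (fun x => gaussianReal (a * x + b) v) =
      gaussianReal (a * μ₀ + b) ((a ^ 2).toNNReal * v₀ + v) := by
  rw [toNNReal_sq_aux]
  by_cases h₀ : v₀ = 0
  · subst h₀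
    rw [gaussianReal_zero_var, Measure.dirac_bind (meas_gauss_kernel a b v)]
    simp
  by_cases hv : v = 0
  · subst hv
    simp only [gaussianReal_zero_var, add_zero]
    rw [Measure.bind_dirac_eq_map _ (by fun_prop)]
    have : (fun x : ℝ => a * x + b) = (fun x => x + b) ∘ (fun x => a * x) := rfl
    rw [this, ← Measure.map_map (by fun_prop) (by fun_prop),
      gaussianReal_map_const_mul, gaussianReal_map_add_const]
  -- main case
  set w : ℝ≥0 := NNReal.mk (a ^ 2) (sq_nonneg a) * v₀ + v with hw
  have hwne : w ≠ 0 := by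
    simp only [hw, ne_eq, add_eq_zero, not_and]
    exact fun _ => hv
  have hWpos : (0:ℝ) < a ^ 2 * v₀ + v := by
    have hV : (0:ℝ) < v := lt_of_le_of_ne v.2 (by exact_mod_cast (Ne.symm hv))
    positivity
  ext s hs
  rw [Measure.bind_apply hs (meas_gauss_kernel a b v).aemeasurable]
  simp_rw [gaussianReal_of_var_ne_zero _ hv, gaussianReal_of_var_ne_zero _ h₀,
    gaussianReal_of_var_ne_zero _ hwne, withDensity_apply _ hs]
  rw [lintegral_withDensity_eq_lintegral_mul _ (measurable_gaussianPDF _ _)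
    (by apply Measurable.lintegral_prod_right'
          (f := fun p : ℝ × ℝ => gaussianPDF (a * p.1 + b) v p.2)
        unfold gaussianPDF gaussianPDFReal; fun_prop)]
  simp only [Pi.mul_apply]
  calc ∫⁻ x, gaussianPDF μ₀ v₀ x * ∫⁻ y in s, gaussianPDF (a * x + b) v y
      = ∫⁻ x, ∫⁻ y in s, gaussianPDF (a * x + b) v y * gaussianPDF μ₀ v₀ x := by
        congr 1; ext x
        rw [lintegral_mul_const'' _ (by unfold gaussianPDF gaussianPDFReal; fun_prop), mul_comm]
    _ = ∫⁻ y in s, ∫⁻ x, gaussianPDF (a * x + b) v y * gaussianPDF μ₀ v₀ x := by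
        rw [lintegral_lintegral_swap]
        apply Measurable.aemeasurable
        unfold gaussianPDF gaussianPDFReal; fun_prop
    _ = ∫⁻ y in s, gaussianPDF (a * μ₀ + b) w y := by
        apply lintegral_congr
        intro y
        have : ∀ x : ℝ, gaussianPDF (a * x + b) v y * gaussianPDF μ₀ v₀ x =
            gaussianPDF (a * μ₀ + b) w y *
            gaussianPDF ((a * v₀ * (y - b) + v * μ₀) / (a ^ 2 * v₀ + v))
              (NNReal.mk (v₀ * v / (a ^ 2 * v₀ + v)) (by positivity)) x := by
          intro x
          unfold gaussianPDF
          rw [← ENNReal.ofReal_mul (gaussianPDFReal_nonneg _ _ _),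
            ← ENNReal.ofReal_mul (gaussianPDFReal_nonneg _ _ _),
            pdf_prod μ₀ a b h₀ hv y x]
        simp_rw [this]
        rw [lintegral_const_mul _ (measurable_gaussianPDF _ _),
          lintegral_gaussianPDF_eq_one _ (by
            simp only [ne_eq, ← NNReal.coe_eq_zero]
            push_cast
            positivity), mul_one]
end

section
/- Gaussian swap preserves the joint distribution (measure form): let μ₀, b be reals, v₀, v positive reals, and a a nonzero real. Set w := (1/(a^2*v₀) + 1/v)⁻¹ and, for y : ℝ, m(y) := ((a*μ₀ + b)/(a^2*v₀) + y/v) * w. Then the joint measure on ℝ × ℝ obtained by first sampling x from N(μ₀, v₀) and then y from N(a*x + b, v) equals the joint measure obtained by first sampling y from N(a*μ₀ + b, a^2*v₀ + v) and then x from N((m(y) - b)/a, w/a^2): (gaussianReal μ₀ v₀).bind (fun x => Measure.map (fun y => (x, y)) (gaussianReal (a*x + b) v)) = (gaussianReal (a*μ₀ + b) (a^2*v₀ + v)).bind (fun y => Measure.map (fun x => (x, y)) (gaussianReal ((m(y) - b)/a) (w/a^2))). -/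
open MeasureTheory ProbabilityTheory
open scoped NNReal
open scoped ENNReal

lemma bind_withDensity_left {f : ℝ → ℝ≥0∞} {g : ℝ → ℝ → ℝ≥0∞}
    (hf : Measurable f) (hg : Measurable (Function.uncurry g)) :
    (volume.withDensity f).bind
        (fun x => Measure.map (fun y => (x, y)) (volume.withDensity (g x))) =
      ((volume : Measure ℝ).prod volume).withDensity (fun p => f p.1 * g p.1 p.2) := by
  have hG : Measurable (fun p : ℝ × ℝ => g p.1 p.2) := hg
  have hFm : Measurable (fun p : ℝ × ℝ => f p.1 * g p.1 p.2) :=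
    (hf.comp measurable_fst).mul hG
  have key : ∀ (x : ℝ) (s : Set (ℝ × ℝ)), MeasurableSet s →
      (Measure.map (fun y => (x, y)) (volume.withDensity (g x))) s
        = ∫⁻ y, s.indicator (fun p : ℝ × ℝ => g p.1 p.2) (x, y) := by
    intro x s hs
    rw [Measure.map_apply measurable_prodMk_left hs,
      withDensity_apply _ (hs.preimage measurable_prodMk_left),
      ← lintegral_indicator (hs.preimage measurable_prodMk_left)]
    congr 1
  have hmeas : Measurable
      (fun x => Measure.map (fun y => (x, y)) (volume.withDensity (g x))) := by
    apply Measure.measurable_of_measurable_coe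
    intro s hs
    simp_rw [key _ s hs]
    exact Measurable.lintegral_prod_right' (hG.indicator hs)
  ext s hs
  rw [Measure.bind_apply hs hmeas.aemeasurable]
  simp_rw [key _ s hs]
  rw [lintegral_withDensity_eq_lintegral_mul volume hf
    (Measurable.lintegral_prod_right' (hG.indicator hs)),
    withDensity_apply _ hs, ← lintegral_indicator hs,
    lintegral_prod _ (hFm.indicator hs).aemeasurable]
  congr 1; funext x
  simp only [Pi.mul_apply]
  have hmx : Measurable fun y => s.indicator (fun p : ℝ × ℝ => g p.1 p.2) (x, y) :=
    (hG.indicator hs).comp measurable_prodMk_left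
  rw [← lintegral_const_mul (f x) hmx]
  congr 1; funext y
  by_cases h : (x, y) ∈ s <;> simp [Set.indicator_apply, h]

lemma bind_withDensity_right {f : ℝ → ℝ≥0∞} {g : ℝ → ℝ → ℝ≥0∞}
    (hf : Measurable f) (hg : Measurable (Function.uncurry g)) :
    (volume.withDensity f).bind
        (fun y => Measure.map (fun x => (x, y)) (volume.withDensity (g y))) =
      ((volume : Measure ℝ).prod volume).withDensity (fun p => f p.2 * g p.2 p.1) := by
  have hG : Measurable (fun p : ℝ × ℝ => g p.2 p.1) := hg.comp measurable_swap
  have hFm : Measurable (fun p : ℝ × ℝ => f p.2 * g p.2 p.1) :=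
    (hf.comp measurable_snd).mul hG
  have key : ∀ (y : ℝ) (s : Set (ℝ × ℝ)), MeasurableSet s →
      (Measure.map (fun x => (x, y)) (volume.withDensity (g y))) s
        = ∫⁻ x, s.indicator (fun p : ℝ × ℝ => g p.2 p.1) (x, y) := by
    intro y s hs
    rw [Measure.map_apply measurable_prodMk_right hs,
      withDensity_apply _ (hs.preimage measurable_prodMk_right),
      ← lintegral_indicator (hs.preimage measurable_prodMk_right)]
    congr 1
  have hmeas : Measurable
      (fun y => Measure.map (fun x => (x, y)) (volume.withDensity (g y))) := by
    apply Measure.measurable_of_measurable_coe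
    intro s hs
    simp_rw [key _ s hs]
    exact Measurable.lintegral_prod_left' (hG.indicator hs)
  ext s hs
  rw [Measure.bind_apply hs hmeas.aemeasurable]
  simp_rw [key _ s hs]
  rw [lintegral_withDensity_eq_lintegral_mul volume hf
    (Measurable.lintegral_prod_left' (hG.indicator hs)),
    withDensity_apply _ hs, ← lintegral_indicator hs,
    lintegral_prod_symm _ (hFm.indicator hs).aemeasurable]
  congr 1; funext y
  simp only [Pi.mul_apply]
  have hmy : Measurable fun x => s.indicator (fun p : ℝ × ℝ => g p.2 p.1) (x, y) :=
    (hG.indicator hs).comp measurable_prodMk_right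
  rw [← lintegral_const_mul (f y) hmy]
  congr 1; funext x
  by_cases h : (x, y) ∈ s <;> simp [Set.indicator_apply, h]

/-- Gaussian swap preserves the joint distribution (measure form): with
`w = (1/(a^2*v₀) + 1/v)⁻¹` and `m y = ((a*μ₀ + b)/(a^2*v₀) + y/v) * w`, the joint measure
on `ℝ × ℝ` obtained by sampling `x` from `N(μ₀, v₀)` and then `y` from `N(a*x + b, v)`
equals the one obtained by sampling `y` from `N(a*μ₀ + b, a^2*v₀ + v)` and then `x` from
`N((m y - b)/a, w/a^2)`. -/
theorem gaussian_swap_joint (μ₀ b : ℝ) (v₀ v : ℝ≥0) (hv₀ : 0 < v₀) (hv : 0 < v)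
    (a : ℝ) (ha : a ≠ 0) :
    (gaussianReal μ₀ v₀).bind
        (fun x => Measure.map (fun y => (x, y)) (gaussianReal (a * x + b) v)) =
      (gaussianReal (a * μ₀ + b) ((a ^ 2).toNNReal * v₀ + v)).bind
        (fun y => Measure.map (fun x => (x, y))
          (gaussianReal
            ((((a * μ₀ + b) / (a ^ 2 * (v₀ : ℝ)) + y / (v : ℝ)) *
                (1 / (a ^ 2 * (v₀ : ℝ)) + 1 / (v : ℝ))⁻¹ - b) / a)
            (((1 / (a ^ 2 * (v₀ : ℝ)) + 1 / (v : ℝ))⁻¹ / a ^ 2).toNNReal))) := by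
  have hv₀r : (0:ℝ) < (v₀:ℝ) := hv₀
  have hvr : (0:ℝ) < (v:ℝ) := hv
  have ha2 : (0:ℝ) < a ^ 2 := by positivity
  have hW : (0:ℝ) < (1 / (a ^ 2 * (v₀ : ℝ)) + 1 / (v : ℝ))⁻¹ := by positivity
  have hVne : ((a ^ 2).toNNReal * v₀ + v) ≠ 0 :=
    (add_pos_of_nonneg_of_pos zero_le hv).ne'
  have hWne : (((1 / (a ^ 2 * (v₀ : ℝ)) + 1 / (v : ℝ))⁻¹ / a ^ 2).toNNReal) ≠ 0 := by
    rw [ne_eq, Real.toNNReal_eq_zero, not_le]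
    positivity
  rw [gaussianReal_of_var_ne_zero _ hv₀.ne', gaussianReal_of_var_ne_zero _ hVne]
  simp only [gaussianReal_of_var_ne_zero _ hv.ne', gaussianReal_of_var_ne_zero _ hWne]
  have hg1 : Measurable (Function.uncurry fun x : ℝ => gaussianPDF (a * x + b) v) := by
    simp only [Function.uncurry_def, gaussianPDF, gaussianPDFReal]
    fun_prop
  have hg2 : Measurable (Function.uncurry fun y : ℝ => gaussianPDF
      ((((a * μ₀ + b) / (a ^ 2 * (v₀ : ℝ)) + y / (v : ℝ)) *
          (1 / (a ^ 2 * (v₀ : ℝ)) + 1 / (v : ℝ))⁻¹ - b) / a)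
      (((1 / (a ^ 2 * (v₀ : ℝ)) + 1 / (v : ℝ))⁻¹ / a ^ 2).toNNReal)) := by
    simp only [Function.uncurry_def, gaussianPDF, gaussianPDFReal]
    fun_prop
  rw [bind_withDensity_left (measurable_gaussianPDF _ _) hg1,
    bind_withDensity_right (measurable_gaussianPDF _ _) hg2]
  congr 1
  funext p
  obtain ⟨x, y⟩ := p
  simp only [gaussianPDF]
  rw [← ENNReal.ofReal_mul (gaussianPDFReal_nonneg _ _ _),
    ← ENNReal.ofReal_mul (gaussianPDFReal_nonneg _ _ _)]
  congr 1
  simp only [gaussianPDFReal]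
  rw [NNReal.coe_add, NNReal.coe_mul, Real.coe_toNNReal _ (sq_nonneg a),
    Real.coe_toNNReal _ (by positivity :
      (0:ℝ) ≤ (1 / (a ^ 2 * (v₀ : ℝ)) + 1 / (v : ℝ))⁻¹ / a ^ 2)]
  rw [mul_mul_mul_comm, ← Real.exp_add, mul_mul_mul_comm, ← Real.exp_add,
    ← mul_inv, ← mul_inv, ← Real.sqrt_mul (by positivity), ← Real.sqrt_mul (by positivity)]
  have hA : 2 * Real.pi * (v₀:ℝ) * (2 * Real.pi * (v:ℝ))
      = 2 * Real.pi * ((a:ℝ) ^ 2 * (v₀:ℝ) + (v:ℝ)) *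
        (2 * Real.pi * ((1 / (a ^ 2 * (v₀ : ℝ)) + 1 / (v : ℝ))⁻¹ / a ^ 2)) := by
    field_simp
    ring
  have hE : -(x - μ₀) ^ 2 / (2 * (v₀:ℝ)) + -(y - (a * x + b)) ^ 2 / (2 * (v:ℝ))
      = -(y - (a * μ₀ + b)) ^ 2 / (2 * ((a:ℝ) ^ 2 * (v₀:ℝ) + (v:ℝ)))
        + -(x - (((a * μ₀ + b) / (a ^ 2 * (v₀ : ℝ)) + y / (v : ℝ)) *
            (1 / (a ^ 2 * (v₀ : ℝ)) + 1 / (v : ℝ))⁻¹ - b) / a) ^ 2 /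
          (2 * ((1 / (a ^ 2 * (v₀ : ℝ)) + 1 / (v : ℝ))⁻¹ / a ^ 2)) := by
    have hd : (1 / (a ^ 2 * (v₀ : ℝ)) + 1 / (v : ℝ)) ≠ 0 := by positivity
    field_simp
    ring
  rw [hA, hE]
end

section
/- Bernoulli–Bernoulli swap preserves the joint distribution (PMF form): let p₁, q₀, q₁ : ℝ≥0∞ with p₁ ≤ 1, q₀ ≤ 1, q₁ ≤ 1, and set p₂' := p₁*q₁ + (1 - p₁)*q₀. Assume p₂' ≠ 0 and p₂' ≠ 1. Define p₁'(true) := p₁*q₁ / p₂' and p₁'(false) := p₁*(1 - q₁) / (1 - p₂'); then p₁'(t) ≤ 1 for each t : Bool, and the joint PMF on Bool × Bool factorized parent-first equals the joint PMF factorized child-first: (PMF.bernoulli p₁).bind (fun t₁ => ((PMF.bernoulli (if t₁ then q₁ else q₀)).map (fun t₂ => (t₁, t₂)))) = (PMF.bernoulli p₂').bind (fun t₂ => ((PMF.bernoulli (p₁' t₂)).map (fun t₁ => (t₁, t₂)))). -/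
open scoped ENNReal

/-- A `PMF` which assigns probability `p` to `true` and `1 - p` to `false`. -/
noncomputable def PMF.bernoulliENNReal (p : ℝ≥0∞) (h : p ≤ 1) : PMF Bool :=
  PMF.ofFintype (fun b => cond b p (1 - p)) (by simp [h])

/-- The marginal probability `p₂' = p₁*q₁ + (1 - p₁)*q₀` of the child variable is at
most `1`. -/
theorem bernoulli_p2'_le_one (p₁ q₀ q₁ : ℝ≥0∞)
    (hp₁ : p₁ ≤ 1) (hq₀ : q₀ ≤ 1) (hq₁ : q₁ ≤ 1) :
    p₁ * q₁ + (1 - p₁) * q₀ ≤ 1 :=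
  calc p₁ * q₁ + (1 - p₁) * q₀ ≤ p₁ * 1 + (1 - p₁) * 1 :=
        add_le_add (by gcongr) (by gcongr)
    _ = p₁ + (1 - p₁) := by rw [mul_one, mul_one]
    _ = 1 := add_tsub_cancel_of_le hp₁

/-- Bernoulli–Bernoulli swap preserves the joint distribution (PMF form): with
`p₂' = p₁*q₁ + (1 - p₁)*q₀` (assumed `≠ 0` and `≠ 1`), and
`p₁' true = p₁*q₁ / p₂'`, `p₁' false = p₁*(1 - q₁) / (1 - p₂')`, each `p₁' t ≤ 1`
and the joint PMF on `Bool × Bool` factorized parent-first equals the joint PMF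
factorized child-first. -/
theorem bernoulli_bernoulli_swap_joint (p₁ q₀ q₁ : ℝ≥0∞)
    (hp₁ : p₁ ≤ 1) (hq₀ : q₀ ≤ 1) (hq₁ : q₁ ≤ 1)
    (h0 : p₁ * q₁ + (1 - p₁) * q₀ ≠ 0) (h1 : p₁ * q₁ + (1 - p₁) * q₀ ≠ 1) :
    ∃ h : ∀ t₂ : Bool,
        (if t₂ then p₁ * q₁ / (p₁ * q₁ + (1 - p₁) * q₀)
          else p₁ * (1 - q₁) / (1 - (p₁ * q₁ + (1 - p₁) * q₀))) ≤ 1,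
      (PMF.bernoulliENNReal p₁ hp₁).bind
          (fun t₁ =>
            (PMF.bernoulliENNReal (if t₁ then q₁ else q₀) (by cases t₁ <;> simp_all)).map
              (fun t₂ => (t₁, t₂))) =
        (PMF.bernoulliENNReal (p₁ * q₁ + (1 - p₁) * q₀)
            (bernoulli_p2'_le_one p₁ q₀ q₁ hp₁ hq₀ hq₁)).bind
          (fun t₂ =>
            (PMF.bernoulliENNReal
                (if t₂ then p₁ * q₁ / (p₁ * q₁ + (1 - p₁) * q₀)
                  else p₁ * (1 - q₁) / (1 - (p₁ * q₁ + (1 - p₁) * q₀)))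
                (h t₂)).map
              (fun t₁ => (t₁, t₂))) := by
  have hsle : p₁ * q₁ + (1 - p₁) * q₀ ≤ 1 := bernoulli_p2'_le_one p₁ q₀ q₁ hp₁ hq₀ hq₁
  set s : ℝ≥0∞ := p₁ * q₁ + (1 - p₁) * q₀ with hs
  have hsT : s ≠ ∞ := (lt_of_le_of_lt hsle ENNReal.one_lt_top).ne
  have e1 : (1 - p₁) * (1 - q₀) + (1 - p₁) * q₀ = 1 - p₁ := by
    rw [← mul_add, tsub_add_cancel_of_le hq₀, mul_one]
  have e2 : p₁ * (1 - q₁) + p₁ * q₁ = p₁ := by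
    rw [← mul_add, tsub_add_cancel_of_le hq₁, mul_one]
  have hsplit : 1 - s = (1 - p₁) * (1 - q₀) + p₁ * (1 - q₁) := by
    apply ENNReal.sub_eq_of_eq_add hsT
    rw [hs]
    calc (1 : ℝ≥0∞)
        = (1 - p₁) + p₁ := (tsub_add_cancel_of_le hp₁).symm
      _ = ((1 - p₁) * (1 - q₀) + (1 - p₁) * q₀) + (p₁ * (1 - q₁) + p₁ * q₁) := by
          rw [e1, e2]
      _ = (1 - p₁) * (1 - q₀) + p₁ * (1 - q₁) + (p₁ * q₁ + (1 - p₁) * q₀) := by ring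
  have h1s0 : 1 - s ≠ 0 := by
    intro h
    exact h1 (le_antisymm hsle (tsub_eq_zero_iff_le.mp h))
  have h1sT : (1 : ℝ≥0∞) - s ≠ ∞ := by
    exact (lt_of_le_of_lt tsub_le_self ENNReal.one_lt_top).ne
  have ha : p₁ * q₁ ≤ s := le_self_add
  have hc : p₁ * (1 - q₁) ≤ 1 - s := hsplit ▸ le_add_self
  have h : ∀ t₂ : Bool,
      (if t₂ then p₁ * q₁ / (p₁ * q₁ + (1 - p₁) * q₀)
        else p₁ * (1 - q₁) / (1 - (p₁ * q₁ + (1 - p₁) * q₀))) ≤ 1 := by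
    intro t₂
    cases t₂ <;> simp only [if_true, if_false, Bool.false_eq_true, ← hs] <;>
      exact ENNReal.div_le_of_le_mul (by rw [one_mul]; assumption)
  refine ⟨h, ?_⟩
  have key1 : s * (p₁ * q₁ / s) = p₁ * q₁ := ENNReal.mul_div_cancel h0 hsT
  have key2 : s * (1 - p₁ * q₁ / s) = (1 - p₁) * q₀ := by
    have hdiv : (1 : ℝ≥0∞) - p₁ * q₁ / s = (1 - p₁) * q₀ / s := by
      apply ENNReal.sub_eq_of_eq_add
      · exact (lt_of_le_of_lt (h true) ENNReal.one_lt_top).ne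
      · rw [ENNReal.div_add_div_same, add_comm, ← hs, ENNReal.div_self h0 hsT]
    rw [hdiv, ENNReal.mul_div_cancel h0 hsT]
  have key3 : (1 - s) * (p₁ * (1 - q₁) / (1 - s)) = p₁ * (1 - q₁) :=
    ENNReal.mul_div_cancel h1s0 h1sT
  have key4 : (1 - s) * (1 - p₁ * (1 - q₁) / (1 - s)) = (1 - p₁) * (1 - q₀) := by
    have hdiv : (1 : ℝ≥0∞) - p₁ * (1 - q₁) / (1 - s) = (1 - p₁) * (1 - q₀) / (1 - s) := by
      apply ENNReal.sub_eq_of_eq_add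
      · exact (lt_of_le_of_lt (h false) ENNReal.one_lt_top).ne
      · rw [ENNReal.div_add_div_same, ← hsplit, ENNReal.div_self h1s0 h1sT]
    rw [hdiv, ENNReal.mul_div_cancel h1s0 h1sT]
  apply PMF.ext
  rintro ⟨t₁, t₂⟩
  simp only [PMF.bind_apply, PMF.map_apply, PMF.bernoulliENNReal, PMF.ofFintype_apply, tsum_bool, ← hs]
  cases t₁ <;> cases t₂ <;>
    simp only [cond, Prod.mk.injEq, if_true, if_false, and_true, and_false, true_and,
      false_and, if_neg, Bool.false_eq_true, Bool.true_eq_false, mul_zero, zero_add,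
      add_zero, mul_ite, ite_false, ite_true] <;>
    first
      | exact key1.symm
      | exact key2.symm
      | exact key3.symm
      | exact key4.symm
end

section
/- Beta–Bernoulli swap preserves the joint distribution (measure form): for all real a, b > 0, the joint measure on ℝ × Bool obtained by sampling θ from Beta(a, b) and then t from Bern(θ) equals the joint measure obtained by sampling t from Bern(a/(a+b)) and then θ from Beta(a + (if t then 1 else 0), b + (if t then 0 else 1)): (Beta(a, b)).bind (fun θ => Measure.map (fun t => (θ, t)) (Bern θ)) = (Bern (a/(a+b))).bind (fun t => Measure.map (fun θ => (θ, t)) (Beta (a + if t then 1 else 0) (b + if t then 0 else 1))). -/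
open MeasureTheory

/-- The Beta-function normalization constant `B(a, b)` (real powers, Lebesgue measure). -/
noncomputable def betaNorm (a b : ℝ) : ℝ :=
  ∫ x in Set.Ioo (0:ℝ) 1, x ^ (a - 1) * (1 - x) ^ (b - 1)

/-- The Beta measure `Beta(a, b)` on `ℝ`, given by its density with respect to Lebesgue
measure. -/
noncomputable def betaMeasure (a b : ℝ) : Measure ℝ :=
  volume.withDensity fun x =>
    ENNReal.ofReal
      (Set.indicator (Set.Ioo 0 1)
        (fun x => x ^ (a - 1) * (1 - x) ^ (b - 1) / betaNorm a b) x)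

/-- The Bernoulli measure `Bern(p)` on `Bool` with success probability `p`. -/
noncomputable def bernMeasure (p : ℝ) : Measure Bool :=
  ENNReal.ofReal p • Measure.dirac true + ENNReal.ofReal (1 - p) • Measure.dirac false

lemma betaNorm_eq_gamma {a b : ℝ} (ha : 0 < a) (hb : 0 < b) :
    betaNorm a b = Real.Gamma a * Real.Gamma b / Real.Gamma (a + b) := by
  have hab : (0:ℝ) < a + b := by linarith
  have h1 : Complex.betaIntegral (a : ℂ) (b : ℂ) = ((betaNorm a b : ℝ) : ℂ) := by
    have : Complex.betaIntegral (a : ℂ) (b : ℂ)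
        = ∫ x in (0:ℝ)..1, ((x ^ (a - 1) * (1 - x) ^ (b - 1) : ℝ) : ℂ) := by
      rw [Complex.betaIntegral]
      refine intervalIntegral.integral_congr fun x hx => ?_
      rw [Set.uIcc_of_le (by norm_num : (0:ℝ) ≤ 1)] at hx
      push_cast
      rw [Complex.ofReal_cpow hx.1, Complex.ofReal_cpow (by linarith [hx.2] : 0 ≤ 1 - x)]
      push_cast
      ring_nf
    rw [this, intervalIntegral.integral_ofReal]
    congr 1
    rw [intervalIntegral.integral_of_le (by norm_num : (0:ℝ) ≤ 1),
      MeasureTheory.integral_Ioc_eq_integral_Ioo]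
    rfl
  have h2 := Complex.Gamma_mul_Gamma_eq_betaIntegral
    (s := (a:ℂ)) (t := (b:ℂ)) (by simpa using ha) (by simpa using hb)
  rw [h1] at h2
  have h3 : Real.Gamma a * Real.Gamma b = Real.Gamma (a + b) * betaNorm a b := by
    have : ((Real.Gamma a * Real.Gamma b : ℝ) : ℂ)
        = ((Real.Gamma (a + b) * betaNorm a b : ℝ) : ℂ) := by
      push_cast
      rw [← Complex.Gamma_ofReal, ← Complex.Gamma_ofReal, ← Complex.Gamma_ofReal]
      push_cast
      exact h2
    exact_mod_cast this
  have hg : Real.Gamma (a + b) ≠ 0 := (Real.Gamma_pos_of_pos hab).ne'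
  field_simp [h3]
  rw [h3]; ring

lemma betaNorm_pos {a b : ℝ} (ha : 0 < a) (hb : 0 < b) : 0 < betaNorm a b := by
  rw [betaNorm_eq_gamma ha hb]
  exact div_pos (mul_pos (Real.Gamma_pos_of_pos ha) (Real.Gamma_pos_of_pos hb))
    (Real.Gamma_pos_of_pos (by linarith))

lemma betaNorm_succ_left {a b : ℝ} (ha : 0 < a) (hb : 0 < b) :
    betaNorm (a + 1) b = a / (a + b) * betaNorm a b := by
  have hab : (0:ℝ) < a + b := by linarith
  rw [betaNorm_eq_gamma (by linarith) hb, betaNorm_eq_gamma ha hb,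
    Real.Gamma_add_one ha.ne', show a + 1 + b = (a + b) + 1 by ring,
    Real.Gamma_add_one hab.ne']
  field_simp

lemma betaNorm_succ_right {a b : ℝ} (ha : 0 < a) (hb : 0 < b) :
    betaNorm a (b + 1) = b / (a + b) * betaNorm a b := by
  have hab : (0:ℝ) < a + b := by linarith
  rw [betaNorm_eq_gamma ha (by linarith), betaNorm_eq_gamma ha hb,
    Real.Gamma_add_one hb.ne', show a + (b + 1) = (a + b) + 1 by ring,
    Real.Gamma_add_one hab.ne']
  field_simp

lemma betaDens_measurable (a b : ℝ) :
    Measurable fun x => ENNReal.ofReal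
      (Set.indicator (Set.Ioo 0 1)
        (fun x => x ^ (a - 1) * (1 - x) ^ (b - 1) / betaNorm a b) x) := by
  apply Measurable.ennreal_ofReal
  apply Measurable.indicator _ measurableSet_Ioo
  fun_prop

lemma tilt_true {a b : ℝ} (ha : 0 < a) (hb : 0 < b) :
    (betaMeasure a b).withDensity (fun x => ENNReal.ofReal x)
      = ENNReal.ofReal (a / (a + b)) • betaMeasure (a + 1) b := by
  have hab : (0:ℝ) < a + b := by linarith
  unfold betaMeasure
  rw [← withDensity_mul _ (betaDens_measurable a b) (by fun_prop),
    ← withDensity_smul _ (betaDens_measurable (a+1) b)]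
  congr 1
  funext x
  by_cases hx : x ∈ Set.Ioo (0:ℝ) 1
  · simp only [Pi.mul_apply, Pi.smul_apply, Set.indicator_of_mem hx, smul_eq_mul]
    have hx0 : (0:ℝ) < x := hx.1
    have hB := betaNorm_pos ha hb
    rw [← ENNReal.ofReal_mul (div_nonneg (mul_nonneg (Real.rpow_nonneg hx0.le _)
        (Real.rpow_nonneg (by linarith [hx.2]) _)) hB.le),
      ← ENNReal.ofReal_mul (le_of_lt (div_pos ha hab))]
    congr 1
    rw [betaNorm_succ_left ha hb]
    have : x ^ (a + 1 - 1) = x ^ (a - 1) * x := by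
      rw [show a + 1 - 1 = (a - 1) + 1 by ring, Real.rpow_add_one hx0.ne']
    rw [this]
    field_simp
  · simp [Set.indicator_of_notMem hx]

lemma tilt_false {a b : ℝ} (ha : 0 < a) (hb : 0 < b) :
    (betaMeasure a b).withDensity (fun x => ENNReal.ofReal (1 - x))
      = ENNReal.ofReal (b / (a + b)) • betaMeasure a (b + 1) := by
  have hab : (0:ℝ) < a + b := by linarith
  unfold betaMeasure
  rw [← withDensity_mul _ (betaDens_measurable a b) (by fun_prop),
    ← withDensity_smul _ (betaDens_measurable a (b+1))]
  congr 1
  funext x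
  by_cases hx : x ∈ Set.Ioo (0:ℝ) 1
  · simp only [Pi.mul_apply, Pi.smul_apply, Set.indicator_of_mem hx, smul_eq_mul]
    have hx1 : (0:ℝ) < 1 - x := by linarith [hx.2]
    have hB := betaNorm_pos ha hb
    rw [← ENNReal.ofReal_mul (div_nonneg (mul_nonneg (Real.rpow_nonneg hx.1.le _)
        (Real.rpow_nonneg hx1.le _)) hB.le),
      ← ENNReal.ofReal_mul (le_of_lt (div_pos hb hab))]
    congr 1
    rw [betaNorm_succ_right ha hb]
    have : (1 - x) ^ (b + 1 - 1) = (1 - x) ^ (b - 1) * (1 - x) := by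
      rw [show b + 1 - 1 = (b - 1) + 1 by ring, Real.rpow_add_one hx1.ne']
    rw [this]
    field_simp
  · simp [Set.indicator_of_notMem hx]

/-- Beta–Bernoulli swap preserves the joint distribution (measure form): sampling
`θ ~ Beta(a, b)` then `t ~ Bern(θ)` gives the same joint measure on `ℝ × Bool` as
sampling `t ~ Bern(a/(a+b))` then `θ ~ Beta(a + [t], b + [¬t])`. -/
theorem beta_bernoulli_swap_joint (a b : ℝ) (ha : 0 < a) (hb : 0 < b) :
    (betaMeasure a b).bind
        (fun θ => Measure.map (fun t => (θ, t)) (bernMeasure θ)) =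
      (bernMeasure (a / (a + b))).bind
        (fun t => Measure.map (fun θ => (θ, t))
          (betaMeasure (a + if t then 1 else 0) (b + if t then 0 else 1))) := by
  have hab : (0:ℝ) < a + b := by linarith
  have happly : ∀ (θ : ℝ) (s : Set (ℝ × Bool)), MeasurableSet s →
      (Measure.map (fun t => (θ, t)) (bernMeasure θ)) s
        = ENNReal.ofReal θ * Set.indicator ((fun x => (x, true)) ⁻¹' s) 1 θ
          + ENNReal.ofReal (1 - θ) * Set.indicator ((fun x => (x, false)) ⁻¹' s) 1 θ := by
    intro θ s hs
    rw [Measure.map_apply measurable_prodMk_left hs]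
    have hms : MeasurableSet ((fun t => (θ, t)) ⁻¹' s) := measurable_prodMk_left hs
    rw [bernMeasure, Measure.add_apply, Measure.smul_apply, Measure.smul_apply,
      Measure.dirac_apply' _ hms, Measure.dirac_apply' _ hms]
    simp only [smul_eq_mul]
    have i1 : Set.indicator ((fun t => (θ, t)) ⁻¹' s) (1 : Bool → ENNReal) true
        = Set.indicator ((fun x => (x, true)) ⁻¹' s) 1 θ := by
      by_cases h : (θ, true) ∈ s <;> simp [h]
    have i2 : Set.indicator ((fun t => (θ, t)) ⁻¹' s) (1 : Bool → ENNReal) false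
        = Set.indicator ((fun x => (x, false)) ⁻¹' s) 1 θ := by
      by_cases h : (θ, false) ∈ s <;> simp [h]
    rw [i1, i2]
  have hmf : Measurable fun θ => Measure.map (fun t => (θ, t)) (bernMeasure θ) := by
    apply Measure.measurable_measure.mpr
    intro s hs
    simp only [fun θ => happly θ s hs]
    apply Measurable.add
    · exact (measurable_id.ennreal_ofReal).mul
        ((measurable_const.indicator (measurable_prodMk_right hs)))
    · exact (Measurable.ennreal_ofReal (by fun_prop)).mul
        ((measurable_const.indicator (measurable_prodMk_right hs)))
  ext s hs
  rw [Measure.bind_apply hs hmf.aemeasurable, Measure.bind_apply hs measurable_from_top.aemeasurable]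
  set sT : Set ℝ := (fun x => (x, true)) ⁻¹' s with hsT
  set sF : Set ℝ := (fun x => (x, false)) ⁻¹' s with hsF
  have hmsT : MeasurableSet sT := measurable_prodMk_right hs
  have hmsF : MeasurableSet sF := measurable_prodMk_right hs
  -- LHS
  have hL : ∫⁻ θ, (Measure.map (fun t => (θ, t)) (bernMeasure θ)) s ∂(betaMeasure a b)
      = ENNReal.ofReal (a / (a + b)) * betaMeasure (a + 1) b sT
        + ENNReal.ofReal (b / (a + b)) * betaMeasure a (b + 1) sF := by
    simp only [fun θ => happly θ s hs]
    rw [lintegral_add_left (by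
      exact (measurable_id.ennreal_ofReal).mul
        ((measurable_const.indicator hmsT)))]
    have e1 : ∀ θ, ENNReal.ofReal θ * Set.indicator sT 1 θ
        = Set.indicator sT (fun θ => ENNReal.ofReal θ) θ := by
      intro θ; by_cases h : θ ∈ sT <;> simp [h]
    have e2 : ∀ θ, ENNReal.ofReal (1 - θ) * Set.indicator sF 1 θ
        = Set.indicator sF (fun θ => ENNReal.ofReal (1 - θ)) θ := by
      intro θ; by_cases h : θ ∈ sF <;> simp [h]
    simp only [← hsT, ← hsF, e1, e2]
    rw [lintegral_indicator hmsT _, lintegral_indicator hmsF _]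
    have t1 : ∫⁻ θ in sT, ENNReal.ofReal θ ∂(betaMeasure a b)
        = ENNReal.ofReal (a / (a + b)) * betaMeasure (a + 1) b sT := by
      rw [← withDensity_apply _ hmsT, tilt_true ha hb, Measure.smul_apply, smul_eq_mul]
    have t2 : ∫⁻ θ in sF, ENNReal.ofReal (1 - θ) ∂(betaMeasure a b)
        = ENNReal.ofReal (b / (a + b)) * betaMeasure a (b + 1) sF := by
      rw [← withDensity_apply _ hmsF, tilt_false ha hb, Measure.smul_apply, smul_eq_mul]
    rw [t1, t2]
  rw [hL]
  -- RHS
  rw [bernMeasure, lintegral_add_measure, lintegral_smul_measure, lintegral_smul_measure,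
    lintegral_dirac, lintegral_dirac]
  simp only [if_true, if_false]
  rw [Measure.map_apply measurable_prodMk_right hs,
    Measure.map_apply measurable_prodMk_right hs]
  have : 1 - a / (a + b) = b / (a + b) := by field_simp; ring
  rw [this]
  norm_num
  rfl
end

section
/- The Gaussian posterior kernel is the regular conditional distribution of the linear-Gaussian joint: let μ₀, b be reals, v₀, v positive reals, and a a nonzero real, and let ρ be the measure on ℝ × ℝ given by ρ := (gaussianReal μ₀ v₀).bind (fun x => Measure.map (fun y => (y, x)) (gaussianReal (a*x + b) v)) (first coordinate the observation y, second the latent x). Set w := (1/(a^2*v₀) + 1/v)⁻¹ and m(y) := ((a*μ₀ + b)/(a^2*v₀) + y/v) * w. Then (i) the first marginal satisfies ρ.fst = gaussianReal (a*μ₀ + b) (a^2*v₀ + v), and (ii) for ρ.fst-almost every y, the disintegration kernel satisfies ρ.condKernel y = gaussianReal ((m(y) - b)/a) (w/a^2). -/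
open MeasureTheory ProbabilityTheory Real
open scoped NNReal ENNReal

lemma gpk_measurable_pdf2 {α : Type*} [MeasurableSpace α] {f g : α → ℝ} (hf : Measurable f)
    (hg : Measurable g) (v : ℝ≥0) : Measurable fun p => gaussianPDF (f p) v (g p) := by
  simp only [gaussianPDF, gaussianPDFReal]
  fun_prop

lemma gpk_measurable_gaussian_family {α : Type*} [MeasurableSpace α] {f : α → ℝ}
    (hf : Measurable f) {v : ℝ≥0} (hv : v ≠ 0) :
    Measurable fun y => gaussianReal (f y) v := by
  simp_rw [gaussianReal_of_var_ne_zero _ hv]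
  rw [Measure.measurable_measure]
  intro s hs
  simp_rw [withDensity_apply _ hs, ← lintegral_indicator hs]
  have h : ∀ y x, Set.indicator s (gaussianPDF (f y) v) x
      = Set.indicator {p : α × ℝ | p.2 ∈ s} (fun p => gaussianPDF (f p.1) v p.2) (y, x) := by
    intro y x
    by_cases h : x ∈ s <;> simp [Set.indicator_apply, h]
  simp_rw [h]
  exact Measurable.lintegral_prod_right'
    ((gpk_measurable_pdf2 (hf.comp measurable_fst) measurable_snd v).indicator
      (measurable_snd hs))

lemma gpk_pdfReal_prod (μ₀ b a x y t0 t : ℝ) (h0 : 0 < t0) (ht : 0 < t) (ha : a ≠ 0) :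
    ((√(2*π*t0))⁻¹ * rexp (-(x-μ₀)^2/(2*t0))) * ((√(2*π*t))⁻¹ * rexp (-(y-(a*x+b))^2/(2*t))) =
    ((√(2*π*(a^2*t0+t)))⁻¹ * rexp (-(y-(a*μ₀+b))^2/(2*(a^2*t0+t)))) *
    ((√(2*π*((1/(a^2*t0)+1/t)⁻¹/a^2)))⁻¹ *
      rexp (-(x-((((a*μ₀+b)/(a^2*t0)+y/t)*(1/(a^2*t0)+1/t)⁻¹ - b)/a))^2
        / (2*((1/(a^2*t0)+1/t)⁻¹/a^2)))) := by
  have hV : (0:ℝ) < a^2*t0 + t := by positivity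
  have h2 : (0:ℝ) < 1/(a^2*t0) + 1/t := by positivity
  have hw : (0:ℝ) < (1/(a^2*t0)+1/t)⁻¹/a^2 := by positivity
  rw [mul_mul_mul_comm, mul_mul_mul_comm (√(2*π*(a^2*t0+t)))⁻¹]
  congr 1
  · rw [← mul_inv, ← Real.sqrt_mul (by positivity), ← mul_inv,
      ← Real.sqrt_mul (by positivity)]
    congr 2
    field_simp
    ring
  · rw [← Real.exp_add, ← Real.exp_add]
    congr 1
    field_simp
    ring

lemma gpk_pdf_prod (μ₀ b : ℝ) (v₀ v : ℝ≥0) (hv₀ : 0 < v₀) (hv : 0 < v) (a : ℝ) (ha : a ≠ 0)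
    (x y : ℝ) :
    gaussianPDF μ₀ v₀ x * gaussianPDF (a*x+b) v y =
      gaussianPDF (a*μ₀+b) ((a^2).toNNReal * v₀ + v) y *
      gaussianPDF ((((a*μ₀+b)/(a^2*(v₀:ℝ)) + y/(v:ℝ)) * (1/(a^2*(v₀:ℝ)) + 1/(v:ℝ))⁻¹ - b)/a)
        (((1/(a^2*(v₀:ℝ)) + 1/(v:ℝ))⁻¹ / a^2).toNNReal) x := by
  have ht0 : (0:ℝ) < (v₀:ℝ) := hv₀
  have ht : (0:ℝ) < (v:ℝ) := hv
  have hw : (0:ℝ) < (1/(a^2*(v₀:ℝ))+1/(v:ℝ))⁻¹/a^2 := by positivity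
  have hc1 : (((a^2).toNNReal * v₀ + v : ℝ≥0) : ℝ) = a^2*(v₀:ℝ)+(v:ℝ) := by
    push_cast [Real.coe_toNNReal _ (sq_nonneg a)]
    ring
  have hc2 : ((((1/(a^2*(v₀:ℝ)) + 1/(v:ℝ))⁻¹ / a^2).toNNReal : ℝ≥0) : ℝ)
      = (1/(a^2*(v₀:ℝ)) + 1/(v:ℝ))⁻¹ / a^2 := Real.coe_toNNReal _ hw.le
  rw [gaussianPDF, gaussianPDF, gaussianPDF, gaussianPDF,
    ← ENNReal.ofReal_mul (gaussianPDFReal_nonneg _ _ _),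
    ← ENNReal.ofReal_mul (gaussianPDFReal_nonneg _ _ _)]
  congr 1
  simp only [gaussianPDFReal, hc1, hc2]
  exact gpk_pdfReal_prod μ₀ b a x y (v₀:ℝ) (v:ℝ) ht0 ht ha

/-- The Gaussian posterior kernel is the regular conditional distribution of the
linear-Gaussian joint: for `ρ` the joint measure of `(y, x)` with `x ~ N(μ₀, v₀)` and
`y | x ~ N(a*x + b, v)`, the first marginal of `ρ` is `N(a*μ₀ + b, a^2*v₀ + v)`, and for
`ρ.fst`-almost every `y` the disintegration kernel is `N((m y - b)/a, w/a^2)`, where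
`w = (1/(a^2*v₀) + 1/v)⁻¹` and `m y = ((a*μ₀ + b)/(a^2*v₀) + y/v) * w`. -/
theorem gaussian_posterior_is_condKernel (μ₀ b : ℝ) (v₀ v : ℝ≥0)
    (hv₀ : 0 < v₀) (hv : 0 < v) (a : ℝ) (ha : a ≠ 0)
    (ρ : Measure (ℝ × ℝ)) [IsFiniteMeasure ρ]
    (hρ : ρ = (gaussianReal μ₀ v₀).bind
      (fun x => Measure.map (fun y => (y, x)) (gaussianReal (a * x + b) v))) :
    ρ.fst = gaussianReal (a * μ₀ + b) ((a ^ 2).toNNReal * v₀ + v) ∧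
      ∀ᵐ y ∂ρ.fst,
        ρ.condKernel y =
          gaussianReal
            ((((a * μ₀ + b) / (a ^ 2 * (v₀ : ℝ)) + y / (v : ℝ)) *
                (1 / (a ^ 2 * (v₀ : ℝ)) + 1 / (v : ℝ))⁻¹ - b) / a)
            (((1 / (a ^ 2 * (v₀ : ℝ)) + 1 / (v : ℝ))⁻¹ / a ^ 2).toNNReal) := by
  have ht0 : (0:ℝ) < (v₀:ℝ) := hv₀
  have ht : (0:ℝ) < (v:ℝ) := hv
  set m : ℝ → ℝ := fun y =>
    (((a * μ₀ + b) / (a ^ 2 * (v₀ : ℝ)) + y / (v : ℝ)) *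
      (1 / (a ^ 2 * (v₀ : ℝ)) + 1 / (v : ℝ))⁻¹ - b) / a with hm
  set wnn : ℝ≥0 := ((1 / (a ^ 2 * (v₀ : ℝ)) + 1 / (v : ℝ))⁻¹ / a ^ 2).toNNReal with hwnn
  set Vnn : ℝ≥0 := (a ^ 2).toNNReal * v₀ + v with hVnn
  have hwpos : (0:ℝ) < (1 / (a ^ 2 * (v₀ : ℝ)) + 1 / (v : ℝ))⁻¹ / a ^ 2 := by positivity
  have hwne : wnn ≠ 0 := by
    simp only [hwnn, ne_eq, Real.toNNReal_eq_zero, not_le]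
    exact hwpos
  have hmmeas : Measurable m := by
    rw [hm]; fun_prop
  let κ : Kernel ℝ ℝ := ⟨fun y => gaussianReal (m y) wnn,
    gpk_measurable_gaussian_family hmmeas hwne⟩
  have hκapp : ∀ y, κ y = gaussianReal (m y) wnn := fun _ => rfl
  have hκM : IsMarkovKernel κ := ⟨fun y => by rw [hκapp]; infer_instance⟩
  -- the compProd identity
  have hfam : Measurable fun x => Measure.map (fun y => (y, x)) (gaussianReal (a * x + b) v) := by
    rw [Measure.measurable_measure]
    intro s hs
    have hswap : MeasurableSet {p : ℝ × ℝ | (p.2, p.1) ∈ s} := measurable_swap hs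
    simp_rw [Measure.map_apply measurable_prodMk_right hs,
      gaussianReal_of_var_ne_zero _ hv.ne',
      withDensity_apply _ (measurable_prodMk_right hs),
      ← lintegral_indicator (measurable_prodMk_right hs)]
    have h : ∀ x y : ℝ, Set.indicator ((fun y => (y, x)) ⁻¹' s) (gaussianPDF (a * x + b) v) y
        = Set.indicator {p : ℝ × ℝ | (p.2, p.1) ∈ s}
            (fun p => gaussianPDF (a * p.1 + b) v p.2) (x, y) := by
      intro x y
      by_cases h : (y, x) ∈ s <;> simp [Set.indicator_apply, h]
    simp_rw [h]
    exact Measurable.lintegral_prod_right'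
      ((gpk_measurable_pdf2 (by fun_prop) measurable_snd v).indicator hswap)
  have hcomp : ρ = (gaussianReal (a * μ₀ + b) Vnn) ⊗ₘ κ := by
    ext s hs
    have hswap : MeasurableSet {p : ℝ × ℝ | (p.2, p.1) ∈ s} := measurable_swap hs
    have hG : Measurable fun x => gaussianReal (a * x + b) v ((fun y => (y, x)) ⁻¹' s) := by
      have h2 : Measurable fun x => Measure.map (fun y => (y, x)) (gaussianReal (a * x + b) v) s :=
        (Measure.measurable_coe hs).comp hfam
      simp_rw [Measure.map_apply measurable_prodMk_right hs] at h2
      exact h2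
    -- LHS
    have hL : ρ s = ∫⁻ x, ∫⁻ y,
        (gaussianPDF μ₀ v₀ x * gaussianPDF (a * x + b) v y) * s.indicator 1 (y, x)
        ∂(volume : Measure ℝ) ∂(volume : Measure ℝ) := by
      rw [hρ, Measure.bind_apply hs hfam.aemeasurable]
      simp_rw [Measure.map_apply measurable_prodMk_right hs]
      rw [gaussianReal_of_var_ne_zero _ hv₀.ne',
        lintegral_withDensity_eq_lintegral_mul _ (measurable_gaussianPDF _ _) hG]
      congr 1 with x
      simp only [Pi.mul_apply]
      rw [gaussianReal_of_var_ne_zero _ hv.ne',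
        withDensity_apply _ (measurable_prodMk_right hs),
        ← lintegral_indicator (measurable_prodMk_right hs), ← lintegral_const_mul _ (by
          exact (measurable_gaussianPDF _ _).indicator (measurable_prodMk_right hs))]
      congr 1 with y
      by_cases h : (y, x) ∈ s <;> simp [Set.indicator_apply, h, mul_assoc]
    -- RHS
    have hR : ((gaussianReal (a * μ₀ + b) Vnn) ⊗ₘ κ) s = ∫⁻ y, ∫⁻ x,
        (gaussianPDF (a * μ₀ + b) Vnn y * gaussianPDF (m y) wnn x) * s.indicator 1 (y, x)
        ∂(volume : Measure ℝ) ∂(volume : Measure ℝ) := by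
      have hVne : Vnn ≠ 0 := by
        intro h
        rw [hVnn] at h
        exact hv.ne' (by simpa using (add_eq_zero.mp h).2)
      rw [Measure.compProd_apply hs]
      have hκG : Measurable fun y => κ y (Prod.mk y ⁻¹' s) :=
        Kernel.measurable_kernel_prodMk_left hs
      rw [gaussianReal_of_var_ne_zero _ hVne,
        lintegral_withDensity_eq_lintegral_mul _ (measurable_gaussianPDF _ _) hκG]
      congr 1 with y
      simp only [Pi.mul_apply]
      rw [hκapp, gaussianReal_of_var_ne_zero _ hwne,
        withDensity_apply _ (measurable_prodMk_left hs),
        ← lintegral_indicator (measurable_prodMk_left hs), ← lintegral_const_mul _ (by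
          exact (measurable_gaussianPDF _ _).indicator (measurable_prodMk_left hs))]
      congr 1 with x
      by_cases h : (y, x) ∈ s <;> simp [Set.indicator_apply, h, mul_assoc]
    rw [hL, hR]
    rw [lintegral_lintegral_swap]
    · congr 1 with y
      congr 1 with x
      congr 1
      exact gpk_pdf_prod μ₀ b v₀ v hv₀ hv a ha x y
    · have h1 : Measurable fun p : ℝ × ℝ => gaussianPDF μ₀ v₀ p.1 :=
        gpk_measurable_pdf2 measurable_const measurable_fst v₀
      have h2 : Measurable fun p : ℝ × ℝ => gaussianPDF (a * p.1 + b) v p.2 :=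
        gpk_measurable_pdf2 ((measurable_const.mul measurable_fst).add measurable_const)
          measurable_snd v
      have h3 : Measurable fun p : ℝ × ℝ => s.indicator (1 : ℝ × ℝ → ℝ≥0∞) (p.2, p.1) :=
        (measurable_one.indicator hs).comp measurable_swap
      exact ((h1.mul h2).mul h3).aemeasurable
  have hfst : ρ.fst = gaussianReal (a * μ₀ + b) Vnn := by
    rw [hcomp, Measure.fst_compProd]
  refine ⟨hfst, ?_⟩
  have hck := eq_condKernel_of_measure_eq_compProd κ (by rw [hfst]; exact hcomp)
  filter_upwards [hck] with y hy
  rw [← hy, hκapp]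
end
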